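/- Every non-degenerate weight matrix is equivalent to a reduced one: for every Ω ∈ M_{k,n}(ℤ) with 1 ≤ k ≤ n all of whose k×k minors are nonzero, there exists Ω' ∈ M_{k,n}(ℤ) such that the rows of Ω' span the same ℚ-subspace of ℚ^n as the rows of Ω, every k×k minor of Ω' is nonzero, and the gcd of all k×k minors of Ω' equals 1. -/

import Mathlib

/-- The `k × k` minor of a `k × n` integer matrix `Ω` on the set `s` of column indices
(taken in increasing order); junk value `0` if `s` does not have exactly `k` elements. -/
def minorOn {k n : ℕ} (Ω : Matrix (Fin k) (Fin n) ℤ) (s : Finset (Fin n)) : ℤ :=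
  if h : s.card = k then (Ω.submatrix id (s.orderEmbOfFin h)).det else 0

/-- A weight matrix is non-degenerate if all of its `k × k` minors are nonzero. -/
def NonDegenerate {k n : ℕ} (Ω : Matrix (Fin k) (Fin n) ℤ) : Prop :=
  ∀ s : Finset (Fin n), s.card = k → minorOn Ω s ≠ 0

/-- The gcd `d` of all `k × k` minors of `Ω`. -/
def minorGcd {k n : ℕ} (Ω : Matrix (Fin k) (Fin n) ℤ) : ℤ :=
  ((Finset.univ : Finset (Fin n)).powersetCard k).gcd (minorOn Ω)

open Matrix

/-- Over a field, a `k × n` matrix with linearly independent rows has a nonzero `k × k` minor. -/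
lemma exists_minor_ne_zero {k n : ℕ} {F : Type*} [Field F] (A : Matrix (Fin k) (Fin n) F)
    (hA : LinearIndependent F (fun i => A i)) :
    ∃ (s : Finset (Fin n)) (h : s.card = k),
      (A.submatrix id (s.orderEmbOfFin h)).det ≠ 0 := by
  classical
  have hrank : A.rank = k := by
    simpa using hA.rank_matrix
  have hspan : Submodule.span F (Set.range Aᵀ) = ⊤ := by
    apply Submodule.eq_top_of_finrank_eq
    rw [show Set.range Aᵀ = Set.range A.col from rfl, ← Matrix.rank_eq_finrank_span_cols, hrank]
    simp [Module.finrank_pi]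
  obtain ⟨b, hbsub, hbspan, hli⟩ := exists_linearIndependent F (Set.range Aᵀ)
  rw [hspan] at hbspan
  have hbfin : b.Finite := (Set.finite_range Aᵀ).subset hbsub
  haveI : Fintype b := hbfin.fintype
  let B : Module.Basis b F (Fin k → F) := Module.Basis.mk (v := fun v : b => (v : Fin k → F)) hli
    (by rw [show (Set.range fun v : b => (v : Fin k → F)) = b from Subtype.range_coe, hbspan])
  have hcardb : Fintype.card b = k := by
    have := Module.finrank_eq_card_basis B
    simpa [Module.finrank_pi] using this.symm
  have hchoice : ∀ v : b, ∃ j : Fin n, Aᵀ j = (v : Fin k → F) := fun v => hbsub v.2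
  choose g hg using hchoice
  have hginj : Function.Injective g := by
    intro v w hvw
    have : (v : Fin k → F) = w := by rw [← hg v, ← hg w, hvw]
    exact Subtype.ext this
  let s : Finset (Fin n) := Finset.univ.image g
  have hs : s.card = k := by
    rw [Finset.card_image_of_injective _ hginj, Finset.card_univ, hcardb]
  refine ⟨s, hs, ?_⟩
  have hmem : ∀ l : Fin k, s.orderEmbOfFin hs l ∈ s := fun l => s.orderEmbOfFin_mem hs l
  have hφ : ∀ l : Fin k, ∃ v : b, g v = s.orderEmbOfFin hs l := by
    intro l
    have := hmem l
    simp only [s, Finset.mem_image, Finset.mem_univ, true_and] at this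
    obtain ⟨v, hv⟩ := this
    exact ⟨v, hv⟩
  choose φ hφ' using hφ
  have hφinj : Function.Injective φ := by
    intro l l' h
    have : s.orderEmbOfFin hs l = s.orderEmbOfFin hs l' := by rw [← hφ' l, ← hφ' l', h]
    exact (s.orderEmbOfFin hs).injective this
  have hcols : LinearIndependent F (fun l : Fin k => (A.submatrix id (s.orderEmbOfFin hs))ᵀ l) := by
    have : (fun l : Fin k => (A.submatrix id (s.orderEmbOfFin hs))ᵀ l)
        = (fun v : b => (v : Fin k → F)) ∘ φ := by
      funext l
      ext j
      have : Aᵀ (g (φ l)) = (φ l : Fin k → F) := hg (φ l)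
      calc (A.submatrix id (s.orderEmbOfFin hs))ᵀ l j = A j (s.orderEmbOfFin hs l) := rfl
        _ = Aᵀ (g (φ l)) j := by rw [hφ' l]; rfl
        _ = (φ l : Fin k → F) j := by rw [this]
    rw [this]
    exact hli.comp φ hφinj
  have : IsUnit (A.submatrix id (s.orderEmbOfFin hs)) :=
    Matrix.linearIndependent_cols_iff_isUnit.mp hcols
  have := (Matrix.isUnit_iff_isUnit_det _).mp this
  exact this.ne_zero

/-- An integer square matrix with nonzero determinant has ℤ-linearly independent rows. -/
lemma int_rows_li {k : ℕ} (S : Matrix (Fin k) (Fin k) ℤ) (h : S.det ≠ 0) :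
    LinearIndependent ℤ (fun i => S i) := by
  have hdet : (S.map (Int.cast : ℤ → ℚ)).det = (S.det : ℚ) := by
    rw [show S.map (Int.cast : ℤ → ℚ) = (Int.castRingHom ℚ).mapMatrix S from rfl,
      ← RingHom.map_det]
    rfl
  have hq : (S.map (Int.cast : ℤ → ℚ)).det ≠ 0 := by
    rw [hdet]; exact_mod_cast h
  have hqU : IsUnit (S.map (Int.cast : ℤ → ℚ)) :=
    (Matrix.isUnit_iff_isUnit_det _).mpr (isUnit_iff_ne_zero.mpr hq)
  have hli : LinearIndependent ℚ (fun i => (S.map (Int.cast : ℤ → ℚ)) i) :=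
    Matrix.linearIndependent_rows_iff_isUnit.mpr hqU
  rw [Fintype.linearIndependent_iff] at hli ⊢
  intro g hg i
  have := hli (fun i => (g i : ℚ)) ?_ i
  · exact_mod_cast this
  · funext j
    have hj := congrFun hg j
    simp only [Finset.sum_apply, Pi.smul_apply, smul_eq_mul, Pi.zero_apply] at hj ⊢
    simp only [Matrix.map_apply]
    exact_mod_cast hj

/-- Minors multiply under left multiplication by a square matrix. -/
lemma minorOn_mul {k n : ℕ} (P : Matrix (Fin k) (Fin k) ℤ) (Q : Matrix (Fin k) (Fin n) ℤ)
    (s : Finset (Fin n)) : minorOn (P * Q) s = P.det * minorOn Q s := by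
  unfold minorOn
  split
  · next h =>
    rw [show (P * Q).submatrix id (s.orderEmbOfFin h) = P * Q.submatrix id (s.orderEmbOfFin h) by
      ext i j; simp [Matrix.mul_apply], Matrix.det_mul]
  · ring

lemma row_span_mul_le {k n : ℕ} (P : Matrix (Fin k) (Fin k) ℚ) (Q : Matrix (Fin k) (Fin n) ℚ) :
    Submodule.span ℚ (Set.range fun i => (P * Q) i) ≤
      Submodule.span ℚ (Set.range fun i => Q i) := by
  rw [Submodule.span_le]
  rintro _ ⟨i, rfl⟩
  have : (P * Q) i = ∑ l, P i l • Q l := by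
    funext j; simp [Matrix.mul_apply]
  show (P * Q) i ∈ _
  rw [this]
  exact Submodule.sum_mem _ fun l _ =>
    Submodule.smul_mem _ _ (Submodule.subset_span ⟨l, rfl⟩)

/-- Every non-degenerate weight matrix is equivalent to a reduced one. -/
theorem stmt2 {k n : ℕ} (hk : 1 ≤ k) (hkn : k ≤ n) (Ω : Matrix (Fin k) (Fin n) ℤ)
    (hΩ : NonDegenerate Ω) :
    ∃ Ω' : Matrix (Fin k) (Fin n) ℤ,
      Submodule.span ℚ (Set.range fun i : Fin k => fun j : Fin n => (Ω' i j : ℚ)) =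
        Submodule.span ℚ (Set.range fun i : Fin k => fun j : Fin n => (Ω i j : ℚ)) ∧
      NonDegenerate Ω' ∧ minorGcd Ω' = 1 := by
  classical
  obtain ⟨s₁, -, hs₁⟩ :=
    Finset.exists_subset_card_eq (show k ≤ (Finset.univ : Finset (Fin n)).card by simpa using hkn)
  have hdetS : (Ω.submatrix id (s₁.orderEmbOfFin hs₁)).det ≠ 0 := by
    have := hΩ s₁ hs₁; rwa [minorOn, dif_pos hs₁] at this
  have hind : LinearIndependent ℤ (fun i => Ω i) := by
    have hS := int_rows_li _ hdetS
    exact LinearIndependent.of_comp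
      (LinearMap.funLeft ℤ ℤ (s₁.orderEmbOfFin hs₁)) hS
  set N := Submodule.span ℤ (Set.range fun i => Ω i) with hN
  obtain ⟨m, snf⟩ := N.smithNormalForm (Pi.basisFun ℤ (Fin n))
  have hrowmem : ∀ i, Ω i ∈ N := fun i => Submodule.subset_span (Set.mem_range_self i)
  have hmk : m = k := by
    have b1 := Module.finrank_eq_card_basis snf.bN
    have b2 := Module.finrank_eq_card_basis (Module.Basis.span hind)
    rw [← hN] at b2
    simp only [Fintype.card_fin] at b1 b2
    omega
  let e : Fin k ≃ Fin m := finCongr hmk.symm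
  set Ω' : Matrix (Fin k) (Fin n) ℤ := fun i j => snf.bM (snf.f (e i)) j with hΩ'def
  set A : Matrix (Fin k) (Fin k) ℤ :=
    fun i l => snf.bN.repr ⟨Ω i, hrowmem i⟩ (e l) * snf.a (e l) with hAdef
  have hfact : Ω = A * Ω' := by
    ext i j
    have hrep := snf.bN.sum_repr ⟨Ω i, hrowmem i⟩
    have h1 : Ω i j
        = ∑ l : Fin m, snf.bN.repr ⟨Ω i, hrowmem i⟩ l * ((snf.bN l : Fin n → ℤ) j) := by
      conv_lhs => rw [show Ω i = ((⟨Ω i, hrowmem i⟩ : N) : Fin n → ℤ) from rfl, ← hrep]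
      push_cast
      simp
    rw [h1, Matrix.mul_apply,
      ← Equiv.sum_comp e (fun l => snf.bN.repr ⟨Ω i, hrowmem i⟩ l * ((snf.bN l : Fin n → ℤ) j))]
    congr 1
    funext l
    rw [snf.snf (e l)]
    simp [hAdef, hΩ'def, mul_assoc]
  have hAdet : A.det ≠ 0 := by
    intro h0
    have := hΩ s₁ hs₁
    rw [hfact, minorOn_mul, h0, zero_mul] at this
    exact this rfl
  have hnd' : NonDegenerate Ω' := by
    intro s hs hzero
    have := hΩ s hs
    rw [hfact, minorOn_mul, hzero, mul_zero] at this
    exact this rfl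
  refine ⟨Ω', ?_, hnd', ?_⟩
  · -- span equality
    set Aq : Matrix (Fin k) (Fin k) ℚ := A.map (Int.cast : ℤ → ℚ) with hAq
    set Ωq : Matrix (Fin k) (Fin n) ℚ := Ω.map (Int.cast : ℤ → ℚ) with hΩq
    set Ω'q : Matrix (Fin k) (Fin n) ℚ := Ω'.map (Int.cast : ℤ → ℚ) with hΩ'q
    have hqfact : Ωq = Aq * Ω'q := by
      ext i j
      rw [hΩq, Matrix.map_apply]
      conv_lhs => rw [hfact]
      simp only [Matrix.mul_apply, Matrix.map_apply, hAq, hΩ'q]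
      push_cast
      rfl
    have hAqdet : Aq.det ≠ 0 := by
      rw [hAq, show A.map (Int.cast : ℤ → ℚ) = (Int.castRingHom ℚ).mapMatrix A from rfl,
        ← RingHom.map_det]
      intro hc
      rw [show (Int.castRingHom ℚ) A.det = ((A.det : ℚ)) from rfl] at hc
      exact hAdet (by exact_mod_cast hc)
    have hrowsq : (fun i : Fin k => fun j : Fin n => ((Ω i j : ℚ))) = fun i => Ωq i := rfl
    have hrowsq' : (fun i : Fin k => fun j : Fin n => ((Ω' i j : ℚ))) = fun i => Ω'q i := rfl
    rw [hrowsq, hrowsq', hqfact]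
    apply le_antisymm
    · have hinv : Ω'q = Aq⁻¹ * (Aq * Ω'q) := by
        rw [← Matrix.mul_assoc, Matrix.nonsing_inv_mul _ (isUnit_iff_ne_zero.mpr hAqdet),
          Matrix.one_mul]
      calc Submodule.span ℚ (Set.range fun i => Ω'q i)
          = Submodule.span ℚ (Set.range fun i => (Aq⁻¹ * (Aq * Ω'q)) i) := by rw [← hinv]
        _ ≤ Submodule.span ℚ (Set.range fun i => (Aq * Ω'q) i) := row_span_mul_le _ _
    · exact row_span_mul_le _ _
  · -- gcd = 1
    set d := minorGcd Ω' with hd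
    have hdnonneg : 0 ≤ d := by
      have h1 : |d| = d := by
        rw [Int.abs_eq_normalize, hd, minorGcd, Finset.normalize_gcd]
      rw [← h1]; exact abs_nonneg d
    have hs₁mem : s₁ ∈ (Finset.univ : Finset (Fin n)).powersetCard k :=
      Finset.mem_powersetCard_univ.mpr hs₁
    have hdne : d ≠ 0 := by
      intro h0
      rw [hd, minorGcd, Finset.gcd_eq_zero_iff] at h0
      exact hnd' s₁ hs₁ (h0 s₁ hs₁mem)
    have hnatabs : d.natAbs = 1 := by
      by_contra hne1
      obtain ⟨p, hp, hpdvd⟩ := Nat.exists_prime_and_dvd hne1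
      haveI : Fact p.Prime := ⟨hp⟩
      have hpd : (p : ℤ) ∣ d := by
        have := Int.natCast_dvd_natCast.mpr hpdvd
        exact dvd_trans this (Int.natAbs_dvd.mpr dvd_rfl)
      -- rows of Ω' are linearly independent mod p
      set C := (Pi.basisFun ℤ (Fin n)).toMatrix snf.bM with hC
      have hCunit : IsUnit C.det := by
        apply IsUnit.of_mul_eq_one (snf.bM.toMatrix (Pi.basisFun ℤ (Fin n))).det
        rw [← Matrix.det_mul, Module.Basis.toMatrix_mul_toMatrix_flip, Matrix.det_one]
      set D := Cᵀ.map (Int.cast : ℤ → ZMod p) with hD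
      have hDunit : IsUnit D := by
        rw [Matrix.isUnit_iff_isUnit_det, hD,
          show Cᵀ.map (Int.cast : ℤ → ZMod p) = (Int.castRingHom (ZMod p)).mapMatrix Cᵀ from rfl,
          ← RingHom.map_det, Matrix.det_transpose]
        exact hCunit.map (Int.castRingHom (ZMod p))
      have hDrows : LinearIndependent (ZMod p) (fun i => D i) :=
        Matrix.linearIndependent_rows_iff_isUnit.mpr hDunit
      set Ω'' : Matrix (Fin k) (Fin n) (ZMod p) := Ω'.map (Int.cast : ℤ → ZMod p) with hΩ''
      have hΩ''rows : (fun i => Ω'' i) = (fun r => D r) ∘ (fun i => snf.f (e i)) := by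
        funext i
        ext j
        simp [hΩ'', hD, hC, hΩ'def, Module.Basis.toMatrix_apply, Pi.basisFun_repr]
        rfl
      have hind'' : LinearIndependent (ZMod p) (fun i => Ω'' i) := by
        rw [hΩ''rows]
        exact hDrows.comp _ (snf.f.injective.comp e.injective)
      obtain ⟨s, hscard, hdetne⟩ := exists_minor_ne_zero Ω'' hind''
      have hdvdminor : (p : ℤ) ∣ minorOn Ω' s :=
        dvd_trans hpd (Finset.gcd_dvd (Finset.mem_powersetCard_univ.mpr hscard))
      apply hdetne
      have hsub : Ω''.submatrix id (s.orderEmbOfFin hscard)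
          = (Ω'.submatrix id (s.orderEmbOfFin hscard)).map (Int.cast : ℤ → ZMod p) := rfl
      rw [hsub,
        show (Ω'.submatrix id (s.orderEmbOfFin hscard)).map (Int.cast : ℤ → ZMod p)
          = (Int.castRingHom (ZMod p)).mapMatrix (Ω'.submatrix id (s.orderEmbOfFin hscard))
          from rfl, ← RingHom.map_det]
      rw [minorOn, dif_pos hscard] at hdvdminor
      exact (ZMod.intCast_zmod_eq_zero_iff_dvd _ p).mpr hdvdminor
    omega
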